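/- A regular distribution D is involutive if and only if for every section Z of D⊥ the 2-form d(i_Z g) vanishes on pairs of sections of D. -/
import Mathlib


/-- Abstract algebraic model of the `C^∞(M)`-module of vector fields on a
Riemannian manifold `(M,g)`: metric `g`, Lie bracket, Levi-Civita connection
`nabla` and the action `act X f = X(f)` of vector fields on functions. -/
structure RiemGeom (C V : Type*) [CommRing C] [AddCommGroup V] [Module C V] where
  g : V →ₗ[C] V →ₗ[C] C
  g_symm : ∀ X Y, g X Y = g Y X
  g_nondeg : ∀ X, (∀ Y, g X Y = 0) → X = 0
  bracket : V → V → V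
  nabla : V → V → V
  act : V → C → C
  act_add : ∀ X f₁ f₂, act X (f₁ + f₂) = act X f₁ + act X f₂
  act_mul : ∀ X f₁ f₂, act X (f₁ * f₂) = f₁ * act X f₂ + f₂ * act X f₁
  act_add_left : ∀ X Y f, act (X + Y) f = act X f + act Y f
  act_smul_left : ∀ (f h : C) X, act (f • X) h = f * act X h
  nabla_add_left : ∀ X X' Y, nabla (X + X') Y = nabla X Y + nabla X' Y
  nabla_smul_left : ∀ (f : C) X Y, nabla (f • X) Y = f • nabla X Y
  nabla_add_right : ∀ X Y Y', nabla X (Y + Y') = nabla X Y + nabla X Y'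
  nabla_leibniz : ∀ X (f : C) Y, nabla X (f • Y) = act X f • Y + f • nabla X Y
  torsion_free : ∀ X Y, nabla X Y - nabla Y X = bracket X Y
  metric_compat : ∀ X Y Z, act X (g Y Z) = g (nabla X Y) Z + g Y (nabla X Z)

/-- A regular distribution `D` in a Riemannian manifold, together with its
orthogonal complement `Dperp` and the orthogonal projection `piD` onto `D`. -/
structure RiemDist {C V : Type*} [CommRing C] [AddCommGroup V] [Module C V]
    (G : RiemGeom C V) where
  D : Submodule C V
  Dperp : Submodule C V
  piD : V →ₗ[C] V
  piD_mem : ∀ v, piD v ∈ D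
  piD_id : ∀ v ∈ D, piD v = v
  perp_mem : ∀ v, v - piD v ∈ Dperp
  piD_perp : ∀ w ∈ Dperp, piD w = 0
  orth : ∀ v ∈ D, ∀ w ∈ Dperp, G.g v w = 0

variable {C V : Type*} [CommRing C] [AddCommGroup V] [Module C V]

/-- The intrinsic connection `∇^D_X Y = π^D (∇_X Y)`. -/
def nablaD (G : RiemGeom C V) (P : RiemDist G) (X Y : V) : V := P.piD (G.nabla X Y)

/-- The second fundamental form `B(X,Y) = ∇_X Y - ∇^D_X Y = π^{D⊥}(∇_X Y)`. -/
def sff (G : RiemGeom C V) (P : RiemDist G) (X Y : V) : V :=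
  G.nabla X Y - P.piD (G.nabla X Y)

/-- The Lie derivative of the metric: `(L_Z g)(X,Y)`. -/
def lieMetric (G : RiemGeom C V) (Z X Y : V) : C :=
  G.act Z (G.g X Y) - G.g (G.bracket Z X) Y - G.g X (G.bracket Z Y)

/-- The exterior derivative of the one-form `i_Z g`: `(d (i_Z g))(X,Y)`. -/
def dIZg (G : RiemGeom C V) (Z X Y : V) : C :=
  G.act X (G.g Z Y) - G.act Y (G.g Z X) - G.g Z (G.bracket X Y)

/-- The curvature endomorphism `R(X,Y)Z` of the Levi-Civita connection. -/
def curvR (G : RiemGeom C V) (X Y Z : V) : V :=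
  G.nabla X (G.nabla Y Z) - G.nabla Y (G.nabla X Z) - G.nabla (G.bracket X Y) Z

/-- The curvature endomorphism `R^D(X,Y)Z` of the intrinsic connection, taken
with respect to the projected bracket `[X,Y]^D = π^D [X,Y]`. -/
def curvRD (G : RiemGeom C V) (P : RiemDist G) (X Y Z : V) : V :=
  nablaD G P X (nablaD G P Y Z) - nablaD G P Y (nablaD G P X Z) -
    nablaD G P (P.piD (G.bracket X Y)) Z


lemma act_zero {C V : Type*} [CommRing C] [AddCommGroup V] [Module C V]
    (G : RiemGeom C V) (X : V) : G.act X 0 = 0 := by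
  have := G.act_add X 0 0
  simpa using this.symm

/-- `D` is involutive iff for every section `Z` of `D⊥` the
2-form `d(i_Z g)` vanishes on pairs of sections of `D`. -/
theorem involutive_iff_dIZg_vanishes
    {C V : Type*} [CommRing C] [AddCommGroup V] [Module C V]
    (G : RiemGeom C V) (P : RiemDist G) :
    (∀ X ∈ P.D, ∀ Y ∈ P.D, G.bracket X Y ∈ P.D) ↔
      (∀ Z ∈ P.Dperp, ∀ X ∈ P.D, ∀ Y ∈ P.D, dIZg G Z X Y = 0) := by
  constructor
  · intro h Z hZ X hX Y hY
    have h1 : G.g Z Y = 0 := by rw [G.g_symm]; exact P.orth Y hY Z hZ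
    have h2 : G.g Z X = 0 := by rw [G.g_symm]; exact P.orth X hX Z hZ
    have h3 : G.g Z (G.bracket X Y) = 0 := by
      rw [G.g_symm]; exact P.orth _ (h X hX Y hY) Z hZ
    simp [dIZg, h1, h2, h3, act_zero]
  · intro h X hX Y hY
    set W := G.bracket X Y with hW
    have key : ∀ Z ∈ P.Dperp, G.g Z W = 0 := by
      intro Z hZ
      have := h Z hZ X hX Y hY
      have h1 : G.g Z Y = 0 := by rw [G.g_symm]; exact P.orth Y hY Z hZ
      have h2 : G.g Z X = 0 := by rw [G.g_symm]; exact P.orth X hX Z hZ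
      simp [dIZg, h1, h2, act_zero, hW] at this
      exact this
    have hWp : W - P.piD W ∈ P.Dperp := P.perp_mem W
    have hzero : W - P.piD W = 0 := by
      apply G.g_nondeg
      intro v
      have hv1 : G.g (W - P.piD W) (P.piD v) = 0 := by
        rw [G.g_symm]; exact P.orth _ (P.piD_mem v) _ hWp
      have hv2 : G.g (v - P.piD v) (W - P.piD W) = 0 := by
        have ha : G.g (v - P.piD v) W = 0 := key _ (P.perp_mem v)
        have hb : G.g (v - P.piD v) (P.piD W) = 0 := by
          rw [G.g_symm]; exact P.orth _ (P.piD_mem W) _ (P.perp_mem v)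
        simp only [map_sub, LinearMap.sub_apply] at ha hb ⊢
        linear_combination ha - hb
      have : G.g (W - P.piD W) v =
          G.g (W - P.piD W) (P.piD v) + G.g (W - P.piD W) (v - P.piD v) := by
        rw [← map_add]
        congr 1
        abel
      rw [this, hv1, G.g_symm, hv2]
      ring
    have : W = P.piD W := by
      have := sub_eq_zero.mp hzero; exact this
    rw [hW] at this ⊢
    rw [this]; exact P.piD_mem _
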